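/- Let X and Y be normed spaces, let Ω ⊆ X be an open convex set, let K ⊆ Y be a closed convex pointed cone with dual cone K* = {y* ∈ Y* : y*(v) ≥ 0 for all v ∈ K}, and let k ∈ K. For a continuous mapping f : X → Y and a constant C ≥ 0, the following are equivalent: (i) f is strongly α(·)-k-paraconvex on Ω with constant C; (ii) for every y* ∈ K*, the composite function y* ∘ f : X → ℝ is strongly α(·)-paraconvex on Ω with constant C·y*(k). -/

import Mathlib

open Filter Topology Set

lemma cone_sep {Y : Type*} [NormedAddCommGroup Y] [NormedSpace ℝ Y]
    (K : Set Y) (hKclosed : IsClosed K) (hKconv : Convex ℝ K)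
    (hKcone : ∀ ⦃c : ℝ⦄, 0 ≤ c → ∀ ⦃y⦄, y ∈ K → c • y ∈ K)
    (hK0 : (0:Y) ∈ K) {v : Y} (hv : v ∉ K) :
    ∃ φ : StrongDual ℝ Y, (∀ w ∈ K, 0 ≤ φ w) ∧ φ v < 0 := by
  obtain ⟨φ, u, hvu, hK⟩ := geometric_hahn_banach_point_closed hKconv hKclosed hv
  have hu0 : u < 0 := by simpa using hK 0 hK0
  refine ⟨φ, ?_, hvu.trans hu0⟩
  intro w hw
  by_contra h
  push_neg at h
  have := hK ((u / φ w) • w) (hKcone (le_of_lt (div_pos_of_neg_of_neg hu0 h)) hw)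
  rw [map_smul, smul_eq_mul, div_mul_cancel₀ _ h.ne] at this
  exact lt_irrefl u this

/-- For a continuous mapping `f : X → Y` between normed spaces, an open
convex set `Ω ⊆ X`, a closed convex pointed cone `K ⊆ Y`, `k ∈ K` and `C ≥ 0`,
`f` is strongly `α(·)`-`k`-paraconvex on `Ω` with constant `C` iff for every `y*` in the
dual cone `K*` the composite `y* ∘ f` is strongly `α(·)`-paraconvex on `Ω` with constant
`C · y*(k)`. -/
theorem gateaux_paraconvex_scalarization
    {X Y : Type*} [NormedAddCommGroup X] [NormedSpace ℝ X]
    [NormedAddCommGroup Y] [NormedSpace ℝ Y]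
    (Ω : Set X) (hΩopen : IsOpen Ω) (hΩconv : Convex ℝ Ω)
    (K : Set Y) (hKclosed : IsClosed K) (hKconv : Convex ℝ K)
    (hKcone : ∀ ⦃c : ℝ⦄, 0 ≤ c → ∀ ⦃y⦄, y ∈ K → c • y ∈ K)
    (hKpointed : K ∩ (-K) ⊆ {0})
    (k : Y) (hk : k ∈ K)
    (α : ℝ → ℝ) (hαnonneg : ∀ t, 0 ≤ t → 0 ≤ α t) (hαmono : MonotoneOn α (Ici 0))
    (hαlim : Tendsto (fun t => α t / t) (𝓝[>] (0 : ℝ)) (𝓝 0))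
    (f : X → Y) (hf : Continuous f) (C : ℝ) (hC : 0 ≤ C) :
    (∀ x ∈ Ω, ∀ y ∈ Ω, ∀ l : ℝ, 0 ≤ l → l ≤ 1 →
        l • f x + (1 - l) • f y + (C * min l (1 - l) * α ‖x - y‖) • k
          - f (l • x + (1 - l) • y) ∈ K)
      ↔ (∀ φ : StrongDual ℝ Y, (∀ v ∈ K, 0 ≤ φ v) →
          ∀ x ∈ Ω, ∀ y ∈ Ω, ∀ l : ℝ, 0 ≤ l → l ≤ 1 →
            φ (f (l • x + (1 - l) • y))
              ≤ l * φ (f x) + (1 - l) * φ (f y)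
                + (C * φ k) * min l (1 - l) * α ‖x - y‖) := by
  constructor
  · intro h φ hφ x hx y hy l hl0 hl1
    have := hφ _ (h x hx y hy l hl0 hl1)
    simp only [map_sub, map_add, map_smul, smul_eq_mul] at this
    linarith
  · intro h x hx y hy l hl0 hl1
    by_contra hv
    have hK0 : (0:Y) ∈ K := by simpa using hKcone le_rfl hk
    obtain ⟨φ, hφ, hφv⟩ := cone_sep K hKclosed hKconv hKcone hK0 hv
    have := h φ hφ x hx y hy l hl0 hl1
    simp only [map_sub, map_add, map_smul, smul_eq_mul] at hφv
    linarith
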